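/- Let (L, M, N, ∂₂, ∂₁, {−,−}) be a 2-crossed module of groups. The operation (l,m,n)(l',m',n') = (l · ^m(ⁿl'), m · ⁿm', nn') makes L ⋊ M ⋊ N a group, where ^m l = {∂₂ l, m}·l denotes the induced action of M on L via the Peiffer lifting. -/

import Mathlib

/-- for a 2-crossed module (L, M, N, ∂₂, ∂₁, {-,-}), the operation
(l,m,n)(l',m',n') = (l · ^m(ⁿl'), m · ⁿm', nn') makes L ⋊ M ⋊ N a group, where
^m l = {∂₂l, m}·l is the action of M on L induced by the Peiffer lifting. -/
theorem twoCrossedModule_semidirect_group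
    {L M N : Type*} [Group L] [Group M] [Group N]
    (phiM : N →* MulAut M) (phiL : N →* MulAut L)
    (d2 : L →* M) (d1 : M →* N) (pl : M → M → L)
    (hcomplex : ∀ l : L, d1 (d2 l) = 1)
    (heqv2 : ∀ (n : N) (l : L), d2 (phiL n l) = phiM n (d2 l))
    (heqv1 : ∀ (n : N) (m : M), d1 (phiM n m) = n * d1 m * n⁻¹)
    (h2cm1 : ∀ m m' : M, d2 (pl m m') = phiM (d1 m) m' * m * m'⁻¹ * m⁻¹)
    (h2cm2 : ∀ l l' : L, pl (d2 l) (d2 l') = l' * l * l'⁻¹ * l⁻¹)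
    (h2cm3i : ∀ m m' m'' : M,
      pl (m * m') m'' = phiL (d1 m) (pl m' m'') * pl m (m' * m'' * m'⁻¹))
    (h2cm3ii : ∀ m m' m'' : M,
      pl m (m' * m'') = pl m m' * (pl (d2 (pl m m'')) (m * m' * m⁻¹) * pl m m''))
    (h2cm4 : ∀ (m : M) (l : L), pl m (d2 l) * pl (d2 l) m = phiL (d1 m) l * l⁻¹)
    (h2cm5 : ∀ (n : N) (m m' : M), phiL n (pl m m') = pl (phiM n m) (phiM n m')) :
    let aL : M → L → L := fun m l => pl (d2 l) m * l
    let mul3 : L × M × N → L × M × N → L × M × N := fun a b =>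
      (a.1 * aL a.2.1 (phiL a.2.2 b.1), a.2.1 * phiM a.2.2 b.2.1, a.2.2 * b.2.2)
    (∀ a b c : L × M × N, mul3 (mul3 a b) c = mul3 a (mul3 b c)) ∧
    (∀ a : L × M × N, mul3 (1, 1, 1) a = a ∧ mul3 a (1, 1, 1) = a) ∧
    (∀ a : L × M × N, ∃ b : L × M × N,
      mul3 a b = (1, 1, 1) ∧ mul3 b a = (1, 1, 1)) := by

  intro aL mul3
  -- basic consequences
  have pl_one_left : ∀ m : M, pl 1 m = 1 := by
    intro m
    have h := h2cm3i 1 1 m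
    simp only [one_mul, mul_one, inv_one, map_one, MulAut.one_apply] at h
    exact mul_eq_right.mp h.symm
  have pl_d2_one : ∀ l : L, pl (d2 l) 1 = 1 := by
    intro l
    have h := h2cm2 l 1
    simpa using h
  have haL_alt : ∀ (m : M) (l : L), aL m l = (pl m (d2 l))⁻¹ * phiL (d1 m) l := by
    intro m l
    have h := h2cm4 m l
    have h' : pl m (d2 l) * pl (d2 l) m * l = phiL (d1 m) l := by rw [h]; group
    simp only [aL]
    rw [← h']; group
  have hd2_aL : ∀ (m : M) (l : L), d2 (aL m l) = m * d2 l * m⁻¹ := by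
    intro m l
    simp only [aL, map_mul, h2cm1, hcomplex, map_one, MulAut.one_apply]
    group
  have haL_mul : ∀ (m : M) (l l' : L), aL m (l * l') = aL m l * aL m l' := by
    intro m l l'
    have hA : m * d2 l * m⁻¹ = d2 (aL m l) := (hd2_aL m l).symm
    have h3 := h2cm3ii m (d2 l) (d2 l')
    rw [hA, h2cm2] at h3
    rw [haL_alt m (l * l'), haL_alt m l, haL_alt m l', map_mul d2, h3,
      map_mul (phiL (d1 m)), haL_alt m l]
    group
  have haL_comp : ∀ (m m' : M) (l : L), aL (m * m') l = aL m (aL m' l) := by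
    intro m m' l
    have hA : m' * d2 l * m'⁻¹ = d2 (aL m' l) := (hd2_aL m' l).symm
    have h3 := h2cm3i m m' (d2 l)
    rw [hA] at h3
    rw [haL_alt (m * m') l, haL_alt m (aL m' l), h3, haL_alt m' l,
      map_mul d1, map_mul phiL, MulAut.mul_apply,
      map_mul (phiL (d1 m)), map_inv (phiL (d1 m))]
    group
  have haL_phi : ∀ (n : N) (m : M) (l : L),
      phiL n (aL m l) = aL (phiM n m) (phiL n l) := by
    intro n m l
    simp only [aL, map_mul, h2cm5, heqv2]
  have haL_one_l : ∀ l : L, aL 1 l = l := by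
    intro l; simp only [aL, pl_d2_one, one_mul]
  have haL_one_r : ∀ m : M, aL m 1 = 1 := by
    intro m; simp only [aL, map_one, pl_one_left, one_mul]
  have hphiL : ∀ (n : N) (x : L), phiL n (phiL n⁻¹ x) = x := by
    intro n x; rw [← MulAut.mul_apply, ← map_mul]; simp
  have hphiM : ∀ (n : N) (x : M), phiM n (phiM n⁻¹ x) = x := by
    intro n x; rw [← MulAut.mul_apply, ← map_mul]; simp
  refine ⟨?_, ?_, ?_⟩
  · rintro ⟨l₁, m₁, n₁⟩ ⟨l₂, m₂, n₂⟩ ⟨l₃, m₃, n₃⟩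
    simp only [mul3, Prod.mk.injEq, map_mul, MulAut.mul_apply, haL_mul, haL_comp,
      haL_phi, mul_assoc, and_self, and_true, true_and]
  · rintro ⟨l, m, n⟩
    constructor <;>
      simp only [mul3, map_one, MulAut.one_apply, haL_one_l, haL_one_r,
        one_mul, mul_one, Prod.mk.injEq, and_self]
  · rintro ⟨l, m, n⟩
    refine ⟨(phiL n⁻¹ (aL m⁻¹ l⁻¹), phiM n⁻¹ m⁻¹, n⁻¹), ?_, ?_⟩
    · simp only [mul3, Prod.mk.injEq, hphiL, hphiM, ← haL_comp]
      refine ⟨?_, by simp, by simp⟩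
      simp [haL_one_l]
    · simp only [mul3, Prod.mk.injEq]
      refine ⟨?_, ?_, by simp⟩
      · rw [← haL_phi, ← map_mul, ← haL_mul]
        simp [haL_one_r]
      · rw [← map_mul]; simp
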